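/- Let B(z) = I + ((z₀ - ζ₀)/(z - z₀)) · (p q†)/(q†p) with q†p ≠ 0, and suppose at some point z* (z* ≠ z₀) we have B(z*) w = v for vectors v, w with q†w ≠ 0 and q†v ≠ 0. Then B(z) = I + (1/(z - z₀)) [ (z₀ - z*) (w q†)/(q†w) + (z* - ζ₀) (v q†)/(q†v) ] for all z ≠ z₀; i.e., the vector p/(q†p) equals ((z₀ - z*)/(z₀ - ζ₀)) w/(q†w) + ((z* - ζ₀)/(z₀ - ζ₀)) v/(q†v), assuming z₀ ≠ ζ₀. -/

import Mathlib

open Matrix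

lemma vecMulVec_mulVec' {m : ℕ} (p q w : Fin m → ℂ) :
    Matrix.vecMulVec p q *ᵥ w = (q ⬝ᵥ w) • p := by
  ext i
  simp [Matrix.mulVec, Matrix.vecMulVec, dotProduct, Finset.mul_sum, mul_comm,
    mul_assoc, mul_left_comm]

theorem elementary_divisor_from_action {m : ℕ} (p q w v : Fin m → ℂ) (z₀ ζ₀ zs : ℂ)
    (hpq : q ⬝ᵥ p ≠ 0) (hqw : q ⬝ᵥ w ≠ 0) (hqv : q ⬝ᵥ v ≠ 0)
    (hz0 : z₀ ≠ ζ₀) (hzs : zs ≠ z₀)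
    (hBw : ((1 : Matrix (Fin m) (Fin m) ℂ) +
        ((z₀ - ζ₀) / (zs - z₀)) • (q ⬝ᵥ p)⁻¹ • Matrix.vecMulVec p q).mulVec w = v) :
    ((q ⬝ᵥ p)⁻¹ • p
        = ((z₀ - zs) / (z₀ - ζ₀)) • (q ⬝ᵥ w)⁻¹ • w
          + ((zs - ζ₀) / (z₀ - ζ₀)) • (q ⬝ᵥ v)⁻¹ • v) ∧
    (∀ z : ℂ, z ≠ z₀ →
      (1 : Matrix (Fin m) (Fin m) ℂ) +
          ((z₀ - ζ₀) / (z - z₀)) • (q ⬝ᵥ p)⁻¹ • Matrix.vecMulVec p q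
        = (1 : Matrix (Fin m) (Fin m) ℂ) + (z - z₀)⁻¹ •
            ((z₀ - zs) • (q ⬝ᵥ w)⁻¹ • Matrix.vecMulVec w q
              + (zs - ζ₀) • (q ⬝ᵥ v)⁻¹ • Matrix.vecMulVec v q)) := by
  have hzs' : zs - z₀ ≠ 0 := sub_ne_zero.mpr hzs
  have hz0' : z₀ - ζ₀ ≠ 0 := sub_ne_zero.mpr hz0
  have hv : v = w + (((z₀ - ζ₀) / (zs - z₀)) * ((q ⬝ᵥ p)⁻¹ * (q ⬝ᵥ w))) • p := by
    rw [← hBw, Matrix.add_mulVec, Matrix.one_mulVec, Matrix.smul_mulVec,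
      Matrix.smul_mulVec, vecMulVec_mulVec', smul_smul, smul_smul]
    ring_nf
  -- cleared (inverse-free) pointwise fact
  have hvp : ∀ i, (z₀ - ζ₀) * (q ⬝ᵥ w) * p i
      = (zs - z₀) * (q ⬝ᵥ p) * (v i - w i) := by
    intro i
    have h := congrFun hv i
    simp only [Pi.add_apply, Pi.smul_apply, smul_eq_mul] at h
    field_simp [hpq] at h
    linear_combination -h
  have hγ : (zs - z₀) * (q ⬝ᵥ v) = (q ⬝ᵥ w) * (zs - ζ₀) := by
    rw [hv, dotProduct_add, dotProduct_smul, smul_eq_mul]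
    field_simp
    ring
  have h1 : (q ⬝ᵥ p)⁻¹ • p
        = ((z₀ - zs) / (z₀ - ζ₀)) • (q ⬝ᵥ w)⁻¹ • w
          + ((zs - ζ₀) / (z₀ - ζ₀)) • (q ⬝ᵥ v)⁻¹ • v := by
    funext i
    simp only [Pi.add_apply, Pi.smul_apply, smul_eq_mul]
    field_simp
    linear_combination (q ⬝ᵥ v) * hvp i + ((q ⬝ᵥ p) * v i) * hγ
  refine ⟨h1, fun z hz => ?_⟩
  have hz' : z - z₀ ≠ 0 := sub_ne_zero.mpr hz
  ext i j
  simp only [Matrix.add_apply, Matrix.smul_apply, Matrix.vecMulVec_apply, smul_eq_mul]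
  congr 1
  field_simp
  linear_combination (q j * (q ⬝ᵥ v)) * hvp i + (q j * (q ⬝ᵥ p) * v i) * hγ
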